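/- Let {E_k : k = 1,...,n} be positive semidefinite operators on ℂ^d, each of rank at most one, such that the map sending each density matrix ρ (positive semidefinite with trace 1, pure or mixed) to (tr(ρ E_1),...,tr(ρ E_n)) is injective on the set of all density matrices. Suppose there is a subset B ⊆ {1,...,n} with ∑_{k∈B} E_k = I. Let G = ∑_{k=1}^n E_k and F_k = G^{-1/2} E_k G^{-1/2}. Then {F_k} is a rank-1 POVM and the map ρ ↦ (tr(ρ F_1),...,tr(ρ F_n)) is injective on the set of all density matrices; that is, {F_k} is informationally complete with respect to all quantum states. -/

import Mathlib

open Matrix BigOperators ComplexOrder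

lemma aux_psd_sum {d n : ℕ} (E : Fin n → Matrix (Fin d) (Fin d) ℂ)
    (hpsd : ∀ k, (E k).PosSemidef) (s : Finset (Fin n)) :
    (∑ k ∈ s, E k).PosSemidef :=
  Finset.sum_induction E Matrix.PosSemidef (fun _ _ ha hb => ha.add hb) .zero (fun i _ => hpsd i)

lemma aux_psd_trace_nonneg {d : ℕ} {M : Matrix (Fin d) (Fin d) ℂ} (hM : M.PosSemidef) :
    0 ≤ M.trace := by
    have := hM.trace_nonneg
    exact this

lemma aux_psd_trace_zero {d : ℕ} {M : Matrix (Fin d) (Fin d) ℂ} (hM : M.PosSemidef)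
    (h : M.trace = 0) : M = 0 := by
  exact hM.trace_eq_zero_iff.mp h

lemma aux_psd_smul {d : ℕ} {M : Matrix (Fin d) (Fin d) ℂ} (hM : M.PosSemidef)
    {c : ℂ} (hc : 0 ≤ c) : (c • M).PosSemidef := by
  constructor
  · have : star c = c := (IsSelfAdjoint.of_nonneg hc)
    show (c • M)ᴴ = c • M
    rw [Matrix.conjTranspose_smul, this, hM.1.eq]
  · intro x
    exact (hM.smul hc).2 x

/-- `ρ` is a density matrix: positive semidefinite with trace one. -/
def IsDensityMatrix {d : ℕ} (ρ : Matrix (Fin d) (Fin d) ℂ) : Prop :=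
  ρ.PosSemidef ∧ ρ.trace = 1

/-- The positive semidefinite square root of a positive semidefinite matrix
(Mathlib's former `Matrix.PosSemidef.sqrt`, removed since). -/
noncomputable def Matrix.PosSemidef.sqrt {n : Type*} [Fintype n] [DecidableEq n] {𝕜 : Type*}
    [RCLike 𝕜] {A : Matrix n n 𝕜} (hA : A.PosSemidef) : Matrix n n 𝕜 :=
  (hA.1.eigenvectorUnitary : Matrix n n 𝕜) * diagonal ((↑) ∘ (√·) ∘ hA.1.eigenvalues) *
    (star hA.1.eigenvectorUnitary : Matrix n n 𝕜)

lemma Matrix.PosSemidef.posSemidef_sqrt {n : Type*} [Fintype n] [DecidableEq n] {𝕜 : Type*}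
    [RCLike 𝕜] {A : Matrix n n 𝕜} (hA : A.PosSemidef) : hA.sqrt.PosSemidef := by
  have h := PosSemidef.mul_mul_conjTranspose_same (A := diagonal ((↑) ∘ (√·) ∘ hA.1.eigenvalues : n → 𝕜))
    ?_ (hA.1.eigenvectorUnitary : Matrix n n 𝕜)
  · simpa [Matrix.PosSemidef.sqrt, Matrix.star_eq_conjTranspose] using h
  refine posSemidef_diagonal_iff.mpr fun i ↦ ?_
  rw [Function.comp_apply, RCLike.nonneg_iff]
  constructor
  · simp only [Function.comp_apply, RCLike.ofReal_re]
    exact Real.sqrt_nonneg _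
  · simp only [Function.comp_apply, RCLike.ofReal_im]

lemma Matrix.PosSemidef.sqrt_mul_self {n : Type*} [Fintype n] [DecidableEq n] {𝕜 : Type*}
    [RCLike 𝕜] {A : Matrix n n 𝕜} (hA : A.PosSemidef) : hA.sqrt * hA.sqrt = A := by
  let C : Matrix n n 𝕜 := hA.1.eigenvectorUnitary
  let E := diagonal ((↑) ∘ Real.sqrt ∘ hA.1.eigenvalues : n → 𝕜)
  suffices C * (E * (star C * C) * E) * star C = A by
    change (C * E * star C) * (C * E * star C) = A
    simpa only [← Matrix.mul_assoc] using this
  have : star C * C = 1 := by simp [C]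
  rw [this, Matrix.mul_one]
  have : E * E = diagonal ((↑) ∘ hA.1.eigenvalues) := by
    rw [diagonal_mul_diagonal]
    congr! with v
    simp [← pow_two, ← RCLike.ofReal_pow, Real.sq_sqrt (hA.eigenvalues_nonneg v)]
  rw [this]
  conv_rhs => rw [hA.1.spectral_theorem, Unitary.conjStarAlgAut_apply]

theorem stmt_1 {d n : ℕ} (E : Fin n → Matrix (Fin d) (Fin d) ℂ)
    (hpsd : ∀ k, (E k).PosSemidef) (hrank : ∀ k, (E k).rank ≤ 1)
    (hinj : ∀ ρ₁ ρ₂ : Matrix (Fin d) (Fin d) ℂ, IsDensityMatrix ρ₁ → IsDensityMatrix ρ₂ →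
      (∀ k, (ρ₁ * E k).trace = (ρ₂ * E k).trace) → ρ₁ = ρ₂)
    (B : Finset (Fin n)) (hB : ∑ k ∈ B, E k = 1) :
    ∀ hG : (∑ k, E k).PosSemidef,
      (∀ k, (hG.sqrt⁻¹ * E k * hG.sqrt⁻¹).PosSemidef) ∧
      (∀ k, (hG.sqrt⁻¹ * E k * hG.sqrt⁻¹).rank ≤ 1) ∧
      (∑ k, hG.sqrt⁻¹ * E k * hG.sqrt⁻¹ = 1) ∧
      (∀ ρ₁ ρ₂ : Matrix (Fin d) (Fin d) ℂ, IsDensityMatrix ρ₁ → IsDensityMatrix ρ₂ →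
        (∀ k, (ρ₁ * (hG.sqrt⁻¹ * E k * hG.sqrt⁻¹)).trace =
              (ρ₂ * (hG.sqrt⁻¹ * E k * hG.sqrt⁻¹)).trace) → ρ₁ = ρ₂) := by
  intro hG
  classical
  set S : Matrix (Fin d) (Fin d) ℂ := hG.sqrt⁻¹ with hSdef
  -- G is positive definite
  have hsplit : (∑ k, E k) = 1 + ∑ k ∈ Bᶜ, E k := by
    rw [← Finset.sum_add_sum_compl B, hB]
  have hGpd : (∑ k, E k).PosDef := by
    rw [hsplit]
    exact Matrix.PosDef.add_posSemidef Matrix.PosDef.one (aux_psd_sum E hpsd _)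
  -- sqrt is invertible
  have hdetG : (∑ k, E k).det ≠ 0 := hGpd.det_pos.ne'
  have hdetsq : hG.sqrt.det * hG.sqrt.det = (∑ k, E k).det := by
    rw [← Matrix.det_mul, hG.sqrt_mul_self]
  have hdet : IsUnit hG.sqrt.det := by
    refine isUnit_iff_ne_zero.mpr fun h => hdetG ?_
    rw [← hdetsq, h, mul_zero]
  have hS1 : S * hG.sqrt = 1 := Matrix.nonsing_inv_mul _ hdet
  have hS2 : hG.sqrt * S = 1 := Matrix.mul_nonsing_inv _ hdet
  have hSH : Sᴴ = S := hG.posSemidef_sqrt.1.inv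
  -- F_k is PSD
  have hFpsd : ∀ k, (S * E k * S).PosSemidef := fun k => by
    have := (hpsd k).mul_mul_conjTranspose_same S
    rwa [hSH] at this
  refine ⟨hFpsd, ?_, ?_, ?_⟩
  · -- rank
    intro k
    calc (S * E k * S).rank ≤ (S * E k).rank := Matrix.rank_mul_le_left _ _
      _ ≤ (E k).rank := Matrix.rank_mul_le_right _ _
      _ ≤ 1 := hrank k
  · -- sums to identity
    calc ∑ k, S * E k * S = S * (∑ k, E k) * S := by
          rw [Finset.mul_sum, Finset.sum_mul]
      _ = (S * hG.sqrt) * (hG.sqrt * S) := by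
          conv_lhs => rw [← hG.sqrt_mul_self]
          simp only [Matrix.mul_assoc]
      _ = 1 := by rw [hS1, hS2, one_mul]
  · -- informational completeness
    intro ρ₁ ρ₂ h₁ h₂ htr
    have key : ∀ (ρ : Matrix (Fin d) (Fin d) ℂ) (k : Fin n),
        ((S * ρ * S) * E k).trace = (ρ * (S * E k * S)).trace := by
      intro ρ k
      rw [show S * ρ * S * E k = S * (ρ * (S * E k)) by simp only [Matrix.mul_assoc],
        Matrix.trace_mul_comm, show ρ * (S * E k) * S = ρ * (S * E k * S) by
          simp only [Matrix.mul_assoc]]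
    have hrec : ∀ ρ : Matrix (Fin d) (Fin d) ℂ, hG.sqrt * (S * ρ * S) * hG.sqrt = ρ := by
      intro ρ
      rw [show hG.sqrt * (S * ρ * S) * hG.sqrt = (hG.sqrt * S) * ρ * (S * hG.sqrt) by
        simp only [Matrix.mul_assoc], hS2, hS1, one_mul, mul_one]
    have hMpsd : ∀ ρ : Matrix (Fin d) (Fin d) ℂ, ρ.PosSemidef → (S * ρ * S).PosSemidef := by
      intro ρ hρ
      have := hρ.mul_mul_conjTranspose_same S
      rwa [hSH] at this
    -- traces of the transformed matrices agree
    have htrace_eq : (S * ρ₁ * S).trace = (S * ρ₂ * S).trace := by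
      have comp : ∀ ρ : Matrix (Fin d) (Fin d) ℂ,
          (S * ρ * S).trace = ∑ k ∈ B, (ρ * (S * E k * S)).trace := by
        intro ρ
        rw [← mul_one (S * ρ * S), ← hB, Finset.mul_sum, Matrix.trace_sum]
        exact Finset.sum_congr rfl fun k _ => key ρ k
      rw [comp, comp]
      exact Finset.sum_congr rfl fun k _ => htr k
    set c : ℂ := (S * ρ₁ * S).trace with hcdef
    have hcnn : 0 ≤ c := aux_psd_trace_nonneg (hMpsd ρ₁ h₁.1)
    have hcne : c ≠ 0 := by
      intro h0
      have hM0 : S * ρ₁ * S = 0 := aux_psd_trace_zero (hMpsd ρ₁ h₁.1) h0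
      have : ρ₁ = 0 := by rw [← hrec ρ₁, hM0, Matrix.mul_zero, Matrix.zero_mul]
      have h1t := h₁.2
      rw [this, Matrix.trace_zero] at h1t
      exact one_ne_zero h1t.symm
    have hcinn : 0 ≤ c⁻¹ := by
      obtain ⟨hre, him⟩ := Complex.nonneg_iff.mp hcnn
      have hc : c = (c.re : ℂ) := Complex.ext rfl him.symm
      rw [hc, ← Complex.ofReal_inv]
      exact Complex.nonneg_iff.mpr ⟨inv_nonneg.mpr hre, rfl⟩
    -- the scaled matrices are density matrices
    have hdm : ∀ ρ : Matrix (Fin d) (Fin d) ℂ, ρ.PosSemidef → (S * ρ * S).trace = c →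
        IsDensityMatrix (c⁻¹ • (S * ρ * S)) := by
      intro ρ hρ htc
      refine ⟨aux_psd_smul (hMpsd ρ hρ) hcinn, ?_⟩
      rw [Matrix.trace_smul, htc, smul_eq_mul, inv_mul_cancel₀ hcne]
    have hσ := hinj (c⁻¹ • (S * ρ₁ * S)) (c⁻¹ • (S * ρ₂ * S))
      (hdm ρ₁ h₁.1 rfl) (hdm ρ₂ h₂.1 htrace_eq.symm) (fun k => by
        rw [Matrix.smul_mul, Matrix.smul_mul, Matrix.trace_smul, Matrix.trace_smul,
          key ρ₁ k, key ρ₂ k, htr k])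
    have hM : S * ρ₁ * S = S * ρ₂ * S := by
      have := congrArg (fun M => c • M) hσ
      simpa [smul_smul, mul_inv_cancel₀ hcne] using this
    calc ρ₁ = hG.sqrt * (S * ρ₁ * S) * hG.sqrt := (hrec ρ₁).symm
      _ = hG.sqrt * (S * ρ₂ * S) * hG.sqrt := by rw [hM]
      _ = ρ₂ := hrec ρ₂
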